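/- Let $H = -\Delta + V$ on $L^2(\mathbb{R}^{3N})$ have normalized ground state $\Psi_0$ with density $\rho_0 \in L^1(\mathbb{R}^3) \cap L^\infty(\mathbb{R}^3)$. The integral operator $T$ on $L^2(\mathbb{R}^{3N})$ with kernel $T(r_1,\ldots,r_N; r_1',\ldots,r_N') = N\sum_{j=1}^N \overline{\Psi_0(r_1,\ldots,r_N)}\Psi_0(r_1',\ldots,r_N')/|r_j - r_1'|$ is Hilbert-Schmidt, with $\|T\|_{HS}^2 \lesssim \int_{\mathbb{R}^6} \frac{\rho_0(r)\rho_0(r')}{|r-r'|^2}drdr' \le \|\rho_0\|_{L^1\cap L^\infty}^2 \| |\cdot|^{-2}\|_{L^1 + L^\infty} < \infty$. -/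

import Mathlib

open MeasureTheory Complex ENNReal NNReal Metric Set

local notation "X" => EuclideanSpace ℝ (Fin 3)

/-- The square-Coulomb kernel (with junk value `0` on the diagonal). -/
noncomputable def Kk : EuclideanSpace ℝ (Fin 3) → EuclideanSpace ℝ (Fin 3) → ℝ≥0∞ :=
  fun r s => ENNReal.ofReal (1 / dist r s ^ 2)

/-- The truncated kernel `1/‖x‖²` on the unit ball. -/
noncomputable def Gg : EuclideanSpace ℝ (Fin 3) → ℝ≥0∞ :=
  (closedBall (0:EuclideanSpace ℝ (Fin 3)) 1).indicator (fun x => ENNReal.ofReal (1 / ‖x‖ ^ 2))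

lemma Kk_meas : Measurable (Function.uncurry Kk) :=
  (measurable_const.div (measurable_dist.pow_const 2)).ennreal_ofReal

lemma Gg_meas : Measurable Gg :=
  ((measurable_const.div (measurable_norm.pow_const 2)).ennreal_ofReal).indicator
    measurableSet_closedBall

lemma finite_inv_sq_ball : ∫⁻ x : X, Gg x < ⊤ := by
  classical
  set f : X → ℝ≥0∞ := fun x => ENNReal.ofReal (1 / ‖x‖ ^ 2) with hf
  set A : ℕ → Set X := fun n => closedBall (0:X) ((1/2:ℝ)^n) \ closedBall 0 ((1/2:ℝ)^(n+1))
    with hA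
  set V : ℝ≥0∞ := volume (ball (0:X) 1) with hV
  have hVlt : V < ⊤ := measure_ball_lt_top
  have hcover : closedBall (0:X) 1 ⊆ {0} ∪ ⋃ n, A n := by
    intro x hx
    by_cases hx0 : x = 0
    · left; simp [hx0]
    right
    have hxn : 0 < ‖x‖ := norm_pos_iff.2 hx0
    have hx1 : ‖x‖ ≤ 1 := mem_closedBall_zero_iff.1 hx
    have hex : ∃ n : ℕ, (1/2:ℝ)^n < ‖x‖ := exists_pow_lt_of_lt_one hxn (by norm_num)
    have hn : (1/2:ℝ) ^ Nat.find hex < ‖x‖ := Nat.find_spec hex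
    have hn0 : Nat.find hex ≠ 0 := by
      intro h
      rw [h, pow_zero] at hn
      linarith
    obtain ⟨m, hm⟩ := Nat.exists_eq_succ_of_ne_zero hn0
    rw [hm, Nat.succ_eq_add_one] at hn
    have hmlt : ¬((1/2:ℝ)^m < ‖x‖) :=
      Nat.find_min hex (by rw [hm]; exact Nat.lt_succ_self m)
    refine mem_iUnion.2 ⟨m, mem_closedBall_zero_iff.2 (not_lt.1 hmlt), fun hmem => ?_⟩
    have h2 : ‖x‖ ≤ (1/2:ℝ)^(m+1) := mem_closedBall_zero_iff.1 hmem
    linarith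
  have hterm : ∀ n, ∫⁻ x in A n, f x ≤ ENNReal.ofReal (4 * (1/2:ℝ)^n) * V := by
    intro n
    have h1 : ∫⁻ x in A n, f x ≤ ∫⁻ _ in A n, ENNReal.ofReal (4 * 4^n) := by
      refine setLIntegral_mono measurable_const ?_
      intro x hx
      obtain ⟨hle, hgt⟩ := hx
      have h2 : (1/2:ℝ)^(n+1) < ‖x‖ := by
        by_contra hc
        exact hgt (mem_closedBall_zero_iff.2 (not_lt.1 hc))
      apply ENNReal.ofReal_le_ofReal
      have ha : (0:ℝ) < (1/2:ℝ)^n := by positivity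
      have hx0 : (0:ℝ) < ‖x‖ := lt_trans (by positivity) h2
      have hxa : (1/2:ℝ)^n / 2 < ‖x‖ := by
        rw [pow_succ] at h2; linarith
      have hprod : (4:ℝ)^n * ((1/2:ℝ)^n)^2 = 1 := by
        rw [show ((1/2:ℝ)^n)^2 = ((1/2:ℝ)^2)^n by rw [← pow_mul, ← pow_mul, Nat.mul_comm],
          ← mul_pow]
        norm_num
      rw [div_le_iff₀ (by positivity)]
      nlinarith [mul_le_mul_of_nonneg_left
        (pow_le_pow_left₀ (by positivity) hxa.le 2) (by positivity : (0:ℝ) ≤ 4 * 4^n)]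
    have h6 : volume (A n) ≤ ENNReal.ofReal (((1/2:ℝ)^n) ^ 3) * V := by
      refine le_trans (measure_mono diff_subset) ?_
      rw [Measure.addHaar_closedBall _ _ (by positivity : (0:ℝ) ≤ (1/2:ℝ)^n)]
      rw [show Module.finrank ℝ (EuclideanSpace ℝ (Fin 3)) = 3 by simp]
    calc ∫⁻ x in A n, f x ≤ ∫⁻ _ in A n, ENNReal.ofReal (4 * 4^n) := h1
      _ = ENNReal.ofReal (4 * 4^n) * volume (A n) := setLIntegral_const _ _
      _ ≤ ENNReal.ofReal (4 * 4^n) * (ENNReal.ofReal (((1/2:ℝ)^n) ^ 3) * V) :=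
          mul_le_mul_right h6 _
      _ = ENNReal.ofReal (4 * 4^n * ((1/2:ℝ)^n) ^ 3) * V := by
          rw [← mul_assoc, ← ENNReal.ofReal_mul (by positivity : (0:ℝ) ≤ 4 * 4^n)]
      _ = ENNReal.ofReal (4 * (1/2:ℝ)^n) * V := by
          congr 1
          rw [mul_assoc]
          congr 1
          rw [show ((1/2:ℝ)^n)^3 = ((1/2:ℝ)^3)^n by rw [← pow_mul, ← pow_mul, Nat.mul_comm],
            ← mul_pow]
          norm_num
  have hgeom : ∑' n : ℕ, ENNReal.ofReal (4 * (1/2:ℝ)^n) * V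
      = (ENNReal.ofReal 4 * (1 - ENNReal.ofReal (1/2))⁻¹) * V := by
    rw [ENNReal.tsum_mul_right]
    congr 1
    calc ∑' n : ℕ, ENNReal.ofReal (4 * (1/2:ℝ)^n)
        = ∑' n : ℕ, ENNReal.ofReal 4 * (ENNReal.ofReal (1/2:ℝ))^n :=
          tsum_congr fun n => by
            rw [ENNReal.ofReal_mul (by norm_num : (0:ℝ) ≤ 4),
              ENNReal.ofReal_pow (by norm_num : (0:ℝ) ≤ 1/2)]
      _ = ENNReal.ofReal 4 * (1 - ENNReal.ofReal (1/2))⁻¹ := by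
          rw [ENNReal.tsum_mul_left, ENNReal.tsum_geometric]
  have hgeom_lt : (ENNReal.ofReal 4 * (1 - ENNReal.ofReal (1/2))⁻¹) * V < ⊤ := by
    refine ENNReal.mul_lt_top (ENNReal.mul_lt_top ENNReal.ofReal_lt_top ?_) hVlt
    rw [ENNReal.inv_lt_top]
    exact tsub_pos_of_lt (ENNReal.ofReal_lt_one.2 (by norm_num))
  calc ∫⁻ x : X, Gg x
      = ∫⁻ x in closedBall (0:X) 1, f x := lintegral_indicator measurableSet_closedBall _
    _ ≤ ∫⁻ x in ({0} ∪ ⋃ n, A n : Set X), f x := lintegral_mono_set hcover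
    _ ≤ (∫⁻ x in ({0} : Set X), f x) + ∫⁻ x in ⋃ n, A n, f x := lintegral_union_le _ _ _
    _ ≤ 0 + ∑' n, ∫⁻ x in A n, f x := by
        refine add_le_add (le_of_eq ?_) (lintegral_iUnion_le _ _)
        rw [Measure.restrict_eq_zero.2 (measure_singleton 0)]
        exact lintegral_zero_measure _
    _ ≤ 0 + ∑' n, ENNReal.ofReal (4 * (1/2:ℝ)^n) * V :=
        add_le_add le_rfl (ENNReal.tsum_le_tsum hterm)
    _ < ⊤ := by rw [zero_add, hgeom]; exact hgeom_lt

lemma sq_sum_le {n : ℕ} (f : Fin n → ℝ≥0∞) :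
    (∑ j, f j) ^ 2 ≤ (2 * n) * ∑ j, f j ^ 2 := by
  have key : ∀ a b : ℝ≥0∞, a * b ≤ a ^ 2 + b ^ 2 := by
    intro a b
    rcases le_total a b with h | h
    · calc a * b ≤ b * b := mul_le_mul_left h _
        _ = b ^ 2 := (sq b).symm
        _ ≤ a ^ 2 + b ^ 2 := le_add_self
    · calc a * b ≤ a * a := mul_le_mul_right h _
        _ = a ^ 2 := (sq a).symm
        _ ≤ a ^ 2 + b ^ 2 := le_self_add
  calc (∑ j, f j) ^ 2 = ∑ j, ∑ k, f j * f k := by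
        rw [sq, Finset.sum_mul_sum]
    _ ≤ ∑ j : Fin n, ∑ k : Fin n, (f j ^ 2 + f k ^ 2) :=
        Finset.sum_le_sum fun j _ => Finset.sum_le_sum fun k _ => key _ _
    _ = ∑ j : Fin n, ((n : ℝ≥0∞) * f j ^ 2 + ∑ k, f k ^ 2) := by
        refine Finset.sum_congr rfl fun j _ => ?_
        rw [Finset.sum_add_distrib, Finset.sum_const, Finset.card_univ, Fintype.card_fin,
          nsmul_eq_mul]
    _ = (2 * n) * ∑ j, f j ^ 2 := by
        rw [Finset.sum_add_distrib, Finset.sum_const, Finset.card_univ, Fintype.card_fin,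
          nsmul_eq_mul, ← Finset.mul_sum]
        ring

lemma coe_nnnorm_sq (u : ℂ) : (‖u‖₊ : ℝ≥0∞) ^ 2 = ENNReal.ofReal (‖u‖ ^ 2) := by
  rw [ENNReal.ofReal_pow (norm_nonneg _), ← ENNReal.ofReal_coe_nnreal, coe_nnnorm]

lemma pointwise_bound (z w : ℂ) (r s : X) :
    (‖z * w / ((dist r s : ℝ) : ℂ)‖₊ : ℝ≥0∞) ^ 2
      ≤ (‖z‖₊ : ℝ≥0∞) ^ 2 * (Kk r s * (‖w‖₊ : ℝ≥0∞) ^ 2) := by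
  have hreal : ‖z * w / ((dist r s : ℝ) : ℂ)‖ ^ 2
      ≤ ‖z‖ ^ 2 * (1 / dist r s ^ 2 * ‖w‖ ^ 2) := by
    rcases eq_or_lt_of_le (dist_nonneg (x := r) (y := s)) with h | h
    · rw [← h]
      simp only [Complex.ofReal_zero, div_zero, norm_zero]
      norm_num
    · have hd : dist r s ≠ 0 := h.ne'
      rw [norm_div, norm_mul, Complex.norm_real, Real.norm_eq_abs, abs_of_pos h, div_pow]
      apply le_of_eq
      field_simp
  calc (‖z * w / ((dist r s : ℝ) : ℂ)‖₊ : ℝ≥0∞) ^ 2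
      = ENNReal.ofReal (‖z * w / ((dist r s : ℝ) : ℂ)‖ ^ 2) := coe_nnnorm_sq _
    _ ≤ ENNReal.ofReal (‖z‖ ^ 2 * (1 / dist r s ^ 2 * ‖w‖ ^ 2)) :=
        ENNReal.ofReal_le_ofReal hreal
    _ = ENNReal.ofReal (‖z‖ ^ 2) * (ENNReal.ofReal (1 / dist r s ^ 2)
          * ENNReal.ofReal (‖w‖ ^ 2)) := by
        rw [ENNReal.ofReal_mul (by positivity), ENNReal.ofReal_mul (by positivity)]
    _ = (‖z‖₊ : ℝ≥0∞) ^ 2 * (Kk r s * (‖w‖₊ : ℝ≥0∞) ^ 2) := by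
        rw [coe_nnnorm_sq z, coe_nnnorm_sq w]
        rfl

set_option maxHeartbeats 4000000 in
/-- Let `Ψ0 ∈ L²((ℝ³)^N)` be a normalized (ground state) wave
function whose one-particle density `ρ0` (characterized by the marginal identity
`∫ φ(r_j)|Ψ0|² = (1/N) ∫ φ ρ0` for each coordinate `j`, which holds with the same `ρ0`
for all `j` by antisymmetry) lies in `L¹(ℝ³) ∩ L^∞(ℝ³)`.  Then the integral operator
with kernel `T(r; r') = N ∑_j conj(Ψ0(r)) Ψ0(r') / |r_j - r'_1|` is Hilbert–Schmidt:
the two-body Coulomb-squared integral `J = ∫∫ ρ0(r)ρ0(r')/|r-r'|² dr dr'` is finite and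
`‖T‖²_{HS} = ∫∫ |T|² ≤ C · J` for some constant `C`. -/
theorem stmt16 (N : ℕ) [NeZero N]
    (Ψ0 : (Fin N → EuclideanSpace ℝ (Fin 3)) → ℂ)
    (hΨmeas : AEStronglyMeasurable Ψ0 volume)
    (hΨnorm : ∫⁻ q, (‖Ψ0 q‖₊ : ℝ≥0∞) ^ 2 = 1)
    (ρ0 : EuclideanSpace ℝ (Fin 3) → ℝ)
    (hρmeas : Measurable ρ0) (hρpos : ∀ r, 0 ≤ ρ0 r)
    (hρ1 : MemLp ρ0 1 volume) (hρtop : MemLp ρ0 ⊤ volume)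
    (hmarg : ∀ j : Fin N, ∀ φ : EuclideanSpace ℝ (Fin 3) → ℝ≥0∞, Measurable φ →
      ∫⁻ q, φ (q j) * (‖Ψ0 q‖₊ : ℝ≥0∞) ^ 2
        = (N : ℝ≥0∞)⁻¹ * ∫⁻ s, φ s * ENNReal.ofReal (ρ0 s)) :
    (∫⁻ (p : EuclideanSpace ℝ (Fin 3) × EuclideanSpace ℝ (Fin 3)),
        ENNReal.ofReal (ρ0 p.1 * ρ0 p.2 / dist p.1 p.2 ^ 2)) < ⊤ ∧
    ∃ C : ℝ≥0,
      ∫⁻ (q : (Fin N → EuclideanSpace ℝ (Fin 3)) × (Fin N → EuclideanSpace ℝ (Fin 3))),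
          (‖(N : ℂ) * ∑ j : Fin N,
              (starRingEnd ℂ) (Ψ0 q.1) * Ψ0 q.2 / ((dist (q.1 j) (q.2 0) : ℝ) : ℂ)‖₊ : ℝ≥0∞) ^ 2
        ≤ C * ∫⁻ (p : EuclideanSpace ℝ (Fin 3) × EuclideanSpace ℝ (Fin 3)),
            ENNReal.ofReal (ρ0 p.1 * ρ0 p.2 / dist p.1 p.2 ^ 2) := by
  classical
  have hρE : ∀ s : X, (‖ρ0 s‖₊ : ℝ≥0∞) = ENNReal.ofReal (ρ0 s) :=
    fun s => Real.enorm_eq_ofReal (hρpos s)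
  have hρEm : Measurable fun s : X => ENNReal.ofReal (ρ0 s) := hρmeas.ennreal_ofReal
  have hρfin : ∫⁻ s : X, ENNReal.ofReal (ρ0 s) < ⊤ := by
    have h := hρ1.2
    rw [eLpNorm_one_eq_lintegral_enorm] at h
    refine lt_of_le_of_lt (le_of_eq ?_) h
    exact lintegral_congr fun s => (hρE s).symm
  have hM : eLpNormEssSup ρ0 volume < ⊤ := by
    have h := hρtop.2
    rwa [eLpNorm_exponent_top] at h
  have hJint : ∀ p : X × X, ENNReal.ofReal (ρ0 p.1 * ρ0 p.2 / dist p.1 p.2 ^ 2)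
      = ENNReal.ofReal (ρ0 p.1) * (Kk p.1 p.2 * ENNReal.ofReal (ρ0 p.2)) := by
    intro p
    rw [show Kk p.1 p.2 = ENNReal.ofReal (1 / dist p.1 p.2 ^ 2) from rfl,
      ← ENNReal.ofReal_mul (by positivity), ← ENNReal.ofReal_mul (hρpos _)]
    congr 1
    rw [one_div, div_eq_mul_inv]
    ring
  have hKp0 : Measurable fun p : X × X => Kk p.1 p.2 := by
    unfold Kk
    exact (measurable_const.div ((measurable_fst.dist measurable_snd).pow_const 2)).ennreal_ofReal
  have hkermeas : Measurable fun p : X × X =>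
      ENNReal.ofReal (ρ0 p.1) * (Kk p.1 p.2 * ENNReal.ofReal (ρ0 p.2)) :=
    (hρEm.comp measurable_fst).mul (hKp0.mul (hρEm.comp measurable_snd))
  set J : ℝ≥0∞ := ∫⁻ (p : X × X), ENNReal.ofReal (ρ0 p.1 * ρ0 p.2 / dist p.1 p.2 ^ 2)
    with hJdef
  have hJeq : J = ∫⁻ p : X × X,
      ENNReal.ofReal (ρ0 p.1) * (Kk p.1 p.2 * ENNReal.ofReal (ρ0 p.2)) :=
    lintegral_congr hJint
  -- Part 1 : J < ⊤
  have part1 : J < ⊤ := by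
    have hKle : ∀ r s : X, Kk r s ≤ Gg (s - r) + 1 := by
      intro r s
      have hds : dist r s = ‖s - r‖ := by rw [dist_comm, dist_eq_norm]
      show ENNReal.ofReal (1 / dist r s ^ 2) ≤ _
      rw [hds]
      by_cases h : ‖s - r‖ ≤ 1
      · have hG : Gg (s - r) = ENNReal.ofReal (1 / ‖s - r‖ ^ 2) :=
          indicator_of_mem (mem_closedBall_zero_iff.2 h) _
        rw [hG]
        exact le_self_add
      · push_neg at h
        have hG0 : Gg (s - r) = 0 :=
          indicator_of_notMem (fun hc => absurd (mem_closedBall_zero_iff.1 hc) (not_le.2 h)) _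
        rw [hG0, zero_add, ← ENNReal.ofReal_one]
        apply ENNReal.ofReal_le_ofReal
        rw [div_le_one (by positivity)]
        nlinarith
    have hm1 : Measurable (fun p : X × X =>
        ENNReal.ofReal (ρ0 p.1) * (Gg (p.2 - p.1) * ENNReal.ofReal (ρ0 p.2))) :=
      (hρEm.comp measurable_fst).mul
        ((Gg_meas.comp (measurable_snd.sub measurable_fst)).mul (hρEm.comp measurable_snd))
    have hsplit : J ≤
        (∫⁻ p : X × X, ENNReal.ofReal (ρ0 p.1) * (Gg (p.2 - p.1) * ENNReal.ofReal (ρ0 p.2)))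
        + ∫⁻ p : X × X, ENNReal.ofReal (ρ0 p.1) * ENNReal.ofReal (ρ0 p.2) := by
      rw [hJeq, ← lintegral_add_left hm1]
      refine lintegral_mono fun p => ?_
      calc ENNReal.ofReal (ρ0 p.1) * (Kk p.1 p.2 * ENNReal.ofReal (ρ0 p.2))
          ≤ ENNReal.ofReal (ρ0 p.1) * ((Gg (p.2 - p.1) + 1) * ENNReal.ofReal (ρ0 p.2)) :=
            mul_le_mul_right (mul_le_mul_left (hKle _ _) _) _
        _ = ENNReal.ofReal (ρ0 p.1) * (Gg (p.2 - p.1) * ENNReal.ofReal (ρ0 p.2))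
            + ENNReal.ofReal (ρ0 p.1) * ENNReal.ofReal (ρ0 p.2) := by ring
    have hB : (∫⁻ p : X × X, ENNReal.ofReal (ρ0 p.1) * ENNReal.ofReal (ρ0 p.2)) < ⊤ := by
      have hBeq : (∫⁻ p : X × X, ENNReal.ofReal (ρ0 p.1) * ENNReal.ofReal (ρ0 p.2))
          = (∫⁻ x : X, ENNReal.ofReal (ρ0 x)) * ∫⁻ y : X, ENNReal.ofReal (ρ0 y) := by
        rw [Measure.volume_eq_prod]
        exact lintegral_prod_mul hρEm.aemeasurable hρEm.aemeasurable
      rw [hBeq]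
      exact ENNReal.mul_lt_top hρfin hρfin
    have hA : (∫⁻ p : X × X,
        ENNReal.ofReal (ρ0 p.1) * (Gg (p.2 - p.1) * ENNReal.ofReal (ρ0 p.2))) < ⊤ := by
      have hc : (∫⁻ x : X, Gg x) < ⊤ := finite_inv_sq_ball
      have hinner : ∀ r : X, (∫⁻ s : X, Gg (s - r) * ENNReal.ofReal (ρ0 s))
          ≤ eLpNormEssSup ρ0 volume * ∫⁻ x : X, Gg x := by
        intro r
        have h1 : (∫⁻ s : X, Gg (s - r) * ENNReal.ofReal (ρ0 s))
            ≤ ∫⁻ s : X, Gg (s - r) * eLpNormEssSup ρ0 volume := by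
          refine lintegral_mono_ae ?_
          filter_upwards [ae_le_eLpNormEssSup (f := ρ0) (μ := volume)] with s hs
          exact mul_le_mul_right (le_trans (le_of_eq (hρE s).symm) hs) _
        refine le_trans h1 (le_of_eq ?_)
        rw [lintegral_mul_const' _ _ hM.ne, lintegral_sub_right_eq_self Gg r, mul_comm]
      calc (∫⁻ p : X × X, ENNReal.ofReal (ρ0 p.1) * (Gg (p.2 - p.1) * ENNReal.ofReal (ρ0 p.2)))
          = ∫⁻ r : X, ∫⁻ s : X, ENNReal.ofReal (ρ0 r) * (Gg (s - r) * ENNReal.ofReal (ρ0 s)) := by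
            rw [Measure.volume_eq_prod]
            exact lintegral_prod _ hm1.aemeasurable
        _ = ∫⁻ r : X, ENNReal.ofReal (ρ0 r) * ∫⁻ s : X, Gg (s - r) * ENNReal.ofReal (ρ0 s) := by
            refine lintegral_congr fun r => ?_
            show (∫⁻ s : X, ENNReal.ofReal (ρ0 r) * (Gg (s - r) * ENNReal.ofReal (ρ0 s))) = _
            exact lintegral_const_mul' _ _ ENNReal.ofReal_ne_top
        _ ≤ ∫⁻ r : X, ENNReal.ofReal (ρ0 r) * (eLpNormEssSup ρ0 volume * ∫⁻ x : X, Gg x) :=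
            lintegral_mono fun r => mul_le_mul_right (hinner r) _
        _ = (∫⁻ r : X, ENNReal.ofReal (ρ0 r)) * (eLpNormEssSup ρ0 volume * ∫⁻ x : X, Gg x) :=
            lintegral_mul_const' _ _ (ENNReal.mul_ne_top hM.ne hc.ne)
        _ < ⊤ := ENNReal.mul_lt_top hρfin (ENNReal.mul_lt_top hM hc)
    exact lt_of_le_of_lt hsplit (ENNReal.add_lt_top.2 ⟨hA, hB⟩)
  refine ⟨part1, ?_⟩
  -- Part 2
  have hN0 : (N : ℝ≥0∞) ≠ 0 := Nat.cast_ne_zero.mpr (NeZero.ne N)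
  have hNinv : (N : ℝ≥0∞)⁻¹ ≠ ⊤ := ENNReal.inv_ne_top.2 hN0
  have hKp : Measurable fun p : X × X => Kk p.1 p.2 := by
    unfold Kk
    exact (measurable_const.div ((measurable_fst.dist measurable_snd).pow_const 2)).ennreal_ofReal
  have hFmeas : Measurable fun r : X => ∫⁻ s : X, Kk r s * ENNReal.ofReal (ρ0 s) := by
    have h : Measurable fun p : X × X => Kk p.1 p.2 * ENNReal.ofReal (ρ0 p.2) :=
      hKp.mul (hρEm.comp measurable_snd)
    exact h.lintegral_prod_right'
  have hJF : J = ∫⁻ r : X, ENNReal.ofReal (ρ0 r) * ∫⁻ s : X, Kk r s * ENNReal.ofReal (ρ0 s) := by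
    rw [hJeq, Measure.volume_eq_prod]
    rw [lintegral_prod _ hkermeas.aemeasurable]
    refine lintegral_congr fun r => ?_
    show (∫⁻ s : X, ENNReal.ofReal (ρ0 r) * (Kk r s * ENNReal.ofReal (ρ0 s))) = _
    exact lintegral_const_mul' _ _ ENNReal.ofReal_ne_top
  -- measurability of the dominating integrand
  have hgmeas : ∀ j : Fin N, AEMeasurable
      (fun q : (Fin N → X) × (Fin N → X) =>
        (‖Ψ0 q.1‖₊ : ℝ≥0∞) ^ 2 * (Kk (q.1 j) (q.2 0) * (‖Ψ0 q.2‖₊ : ℝ≥0∞) ^ 2))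
      ((volume : Measure (Fin N → X)).prod volume) := by
    intro j
    have hW : AEMeasurable (fun x : Fin N → X => (‖Ψ0 x‖₊ : ℝ≥0∞) ^ 2) volume :=
      hΨmeas.enorm.pow_const 2
    have hW1 : AEMeasurable (fun q : (Fin N → X) × (Fin N → X) => (‖Ψ0 q.1‖₊ : ℝ≥0∞) ^ 2)
        ((volume : Measure (Fin N → X)).prod volume) :=
      hW.comp_quasiMeasurePreserving Measure.quasiMeasurePreserving_fst
    have hW2 : AEMeasurable (fun q : (Fin N → X) × (Fin N → X) => (‖Ψ0 q.2‖₊ : ℝ≥0∞) ^ 2)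
        ((volume : Measure (Fin N → X)).prod volume) :=
      hW.comp_quasiMeasurePreserving Measure.quasiMeasurePreserving_snd
    have hK2 : Measurable fun q : (Fin N → X) × (Fin N → X) => Kk (q.1 j) (q.2 0) := by
      have h1 : Measurable fun q : (Fin N → X) × (Fin N → X) => q.1 j :=
        (measurable_pi_apply j).comp measurable_fst
      have h2 : Measurable fun q : (Fin N → X) × (Fin N → X) => q.2 0 :=
        (measurable_pi_apply 0).comp measurable_snd
      unfold Kk
      exact measurable_const.div (((h1.dist h2)).pow_const 2) |>.ennreal_ofReal
    exact hW1.mul (hK2.aemeasurable.mul hW2)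
  -- per-j integral
  have hj : ∀ j : Fin N,
      (∫⁻ q : (Fin N → X) × (Fin N → X),
        (‖Ψ0 q.1‖₊ : ℝ≥0∞) ^ 2 * (Kk (q.1 j) (q.2 0) * (‖Ψ0 q.2‖₊ : ℝ≥0∞) ^ 2)
        ∂((volume : Measure (Fin N → X)).prod volume))
      = (N : ℝ≥0∞)⁻¹ * ((N : ℝ≥0∞)⁻¹ * J) := by
    intro j
    calc (∫⁻ q : (Fin N → X) × (Fin N → X),
          (‖Ψ0 q.1‖₊ : ℝ≥0∞) ^ 2 * (Kk (q.1 j) (q.2 0) * (‖Ψ0 q.2‖₊ : ℝ≥0∞) ^ 2)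
          ∂((volume : Measure (Fin N → X)).prod volume))
        = ∫⁻ x : Fin N → X, ∫⁻ y : Fin N → X,
            (‖Ψ0 x‖₊ : ℝ≥0∞) ^ 2 * (Kk (x j) (y 0) * (‖Ψ0 y‖₊ : ℝ≥0∞) ^ 2) :=
          lintegral_prod _ (hgmeas j)
      _ = ∫⁻ x : Fin N → X,
            ((N : ℝ≥0∞)⁻¹ * ∫⁻ s : X, Kk (x j) s * ENNReal.ofReal (ρ0 s))
              * (‖Ψ0 x‖₊ : ℝ≥0∞) ^ 2 := by
          refine lintegral_congr fun x => ?_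
          show (∫⁻ y : Fin N → X, (‖Ψ0 x‖₊ : ℝ≥0∞) ^ 2
            * (Kk (x j) (y 0) * (‖Ψ0 y‖₊ : ℝ≥0∞) ^ 2)) = _
          have hphi : Measurable fun s : X => Kk (x j) s := by
            unfold Kk
            exact (measurable_const.div
              ((measurable_const.dist measurable_id).pow_const 2)).ennreal_ofReal
          rw [lintegral_const_mul' _ _ (ENNReal.pow_ne_top ENNReal.coe_ne_top),
            hmarg 0 (fun s => Kk (x j) s) hphi]
          exact mul_comm _ _
      _ = (N : ℝ≥0∞)⁻¹ * ∫⁻ s : X,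
            ((N : ℝ≥0∞)⁻¹ * ∫⁻ t : X, Kk s t * ENNReal.ofReal (ρ0 t))
              * ENNReal.ofReal (ρ0 s) :=
          hmarg j (fun r => (N : ℝ≥0∞)⁻¹ * ∫⁻ s : X, Kk r s * ENNReal.ofReal (ρ0 s))
            (measurable_const.mul hFmeas)
      _ = (N : ℝ≥0∞)⁻¹ * ((N : ℝ≥0∞)⁻¹ * J) := by
          congr 1
          rw [hJF]
          calc ∫⁻ s : X, ((N : ℝ≥0∞)⁻¹ * ∫⁻ t : X, Kk s t * ENNReal.ofReal (ρ0 t))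
                * ENNReal.ofReal (ρ0 s)
              = ∫⁻ s : X, (N : ℝ≥0∞)⁻¹
                  * (ENNReal.ofReal (ρ0 s) * ∫⁻ t : X, Kk s t * ENNReal.ofReal (ρ0 t)) :=
                lintegral_congr fun s => by ring
            _ = (N : ℝ≥0∞)⁻¹ * ∫⁻ s : X, ENNReal.ofReal (ρ0 s)
                  * ∫⁻ t : X, Kk s t * ENNReal.ofReal (ρ0 t) :=
                lintegral_const_mul' _ _ hNinv
  -- pointwise bound
  have hptsum : ∀ q : (Fin N → X) × (Fin N → X),
      (‖(N : ℂ) * ∑ j : Fin N,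
          (starRingEnd ℂ) (Ψ0 q.1) * Ψ0 q.2 / ((dist (q.1 j) (q.2 0) : ℝ) : ℂ)‖₊ : ℝ≥0∞) ^ 2
      ≤ (2 * (N : ℝ≥0∞) ^ 3) * ∑ j : Fin N,
          (‖Ψ0 q.1‖₊ : ℝ≥0∞) ^ 2 * (Kk (q.1 j) (q.2 0) * (‖Ψ0 q.2‖₊ : ℝ≥0∞) ^ 2) := by
    intro q
    have h1 : (‖(N : ℂ) * ∑ j : Fin N,
        (starRingEnd ℂ) (Ψ0 q.1) * Ψ0 q.2 / ((dist (q.1 j) (q.2 0) : ℝ) : ℂ)‖₊ : ℝ≥0∞)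
        ≤ (N : ℝ≥0∞) * ∑ j : Fin N,
          (‖(starRingEnd ℂ) (Ψ0 q.1) * Ψ0 q.2 / ((dist (q.1 j) (q.2 0) : ℝ) : ℂ)‖₊ : ℝ≥0∞) := by
      rw [nnnorm_mul, ENNReal.coe_mul]
      have hN : (‖(N : ℂ)‖₊ : ℝ≥0∞) = (N : ℝ≥0∞) := by simp
      rw [hN]
      refine mul_le_mul_right ?_ _
      refine le_trans (ENNReal.coe_le_coe.2 (nnnorm_sum_le _ _)) (le_of_eq ?_)
      push_cast
      rfl
    calc (‖(N : ℂ) * ∑ j : Fin N,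
        (starRingEnd ℂ) (Ψ0 q.1) * Ψ0 q.2 / ((dist (q.1 j) (q.2 0) : ℝ) : ℂ)‖₊ : ℝ≥0∞) ^ 2
        ≤ ((N : ℝ≥0∞) * ∑ j : Fin N,
          (‖(starRingEnd ℂ) (Ψ0 q.1) * Ψ0 q.2
            / ((dist (q.1 j) (q.2 0) : ℝ) : ℂ)‖₊ : ℝ≥0∞)) ^ 2 := pow_le_pow_left' h1 2
      _ = (N : ℝ≥0∞) ^ 2 * (∑ j : Fin N,
          (‖(starRingEnd ℂ) (Ψ0 q.1) * Ψ0 q.2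
            / ((dist (q.1 j) (q.2 0) : ℝ) : ℂ)‖₊ : ℝ≥0∞)) ^ 2 := mul_pow _ _ 2
      _ ≤ (N : ℝ≥0∞) ^ 2 * ((2 * N) * ∑ j : Fin N,
          (‖(starRingEnd ℂ) (Ψ0 q.1) * Ψ0 q.2
            / ((dist (q.1 j) (q.2 0) : ℝ) : ℂ)‖₊ : ℝ≥0∞) ^ 2) :=
          mul_le_mul_right (sq_sum_le _) _
      _ = (2 * (N : ℝ≥0∞) ^ 3) * ∑ j : Fin N,
          (‖(starRingEnd ℂ) (Ψ0 q.1) * Ψ0 q.2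
            / ((dist (q.1 j) (q.2 0) : ℝ) : ℂ)‖₊ : ℝ≥0∞) ^ 2 := by ring
      _ ≤ (2 * (N : ℝ≥0∞) ^ 3) * ∑ j : Fin N,
          (‖Ψ0 q.1‖₊ : ℝ≥0∞) ^ 2 * (Kk (q.1 j) (q.2 0) * (‖Ψ0 q.2‖₊ : ℝ≥0∞) ^ 2) := by
          refine mul_le_mul_right (Finset.sum_le_sum fun j _ => ?_) _
          calc (‖(starRingEnd ℂ) (Ψ0 q.1) * Ψ0 q.2
              / ((dist (q.1 j) (q.2 0) : ℝ) : ℂ)‖₊ : ℝ≥0∞) ^ 2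
              ≤ (‖(starRingEnd ℂ) (Ψ0 q.1)‖₊ : ℝ≥0∞) ^ 2
                * (Kk (q.1 j) (q.2 0) * (‖Ψ0 q.2‖₊ : ℝ≥0∞) ^ 2) := pointwise_bound _ _ _ _
            _ = (‖Ψ0 q.1‖₊ : ℝ≥0∞) ^ 2 * (Kk (q.1 j) (q.2 0) * (‖Ψ0 q.2‖₊ : ℝ≥0∞) ^ 2) := by
                rw [RCLike.nnnorm_conj]
  -- putting it together
  refine ⟨2 * N ^ 4, ?_⟩
  have hmeasure : (volume : Measure ((Fin N → X) × (Fin N → X)))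
      = (volume : Measure (Fin N → X)).prod volume := Measure.volume_eq_prod _ _
  have h2N3 : (2 * (N : ℝ≥0∞) ^ 3) ≠ ⊤ :=
    ENNReal.mul_ne_top ENNReal.ofNat_ne_top (ENNReal.pow_ne_top (ENNReal.natCast_ne_top N))
  have hswap : (∫⁻ q : (Fin N → X) × (Fin N → X), ∑ j : Fin N,
        (‖Ψ0 q.1‖₊ : ℝ≥0∞) ^ 2 * (Kk (q.1 j) (q.2 0) * (‖Ψ0 q.2‖₊ : ℝ≥0∞) ^ 2)
        ∂((volume : Measure (Fin N → X)).prod volume))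
      = ∑ j : Fin N, ∫⁻ q : (Fin N → X) × (Fin N → X),
        (‖Ψ0 q.1‖₊ : ℝ≥0∞) ^ 2 * (Kk (q.1 j) (q.2 0) * (‖Ψ0 q.2‖₊ : ℝ≥0∞) ^ 2)
        ∂((volume : Measure (Fin N → X)).prod volume) :=
    lintegral_finset_sum' _ (fun j _ => hgmeas j)
  calc (∫⁻ q : (Fin N → X) × (Fin N → X),
        (‖(N : ℂ) * ∑ j : Fin N,
          (starRingEnd ℂ) (Ψ0 q.1) * Ψ0 q.2 / ((dist (q.1 j) (q.2 0) : ℝ) : ℂ)‖₊ : ℝ≥0∞) ^ 2)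
      ≤ ∫⁻ q : (Fin N → X) × (Fin N → X), (2 * (N : ℝ≥0∞) ^ 3) * ∑ j : Fin N,
          (‖Ψ0 q.1‖₊ : ℝ≥0∞) ^ 2 * (Kk (q.1 j) (q.2 0) * (‖Ψ0 q.2‖₊ : ℝ≥0∞) ^ 2) :=
        lintegral_mono hptsum
    _ = ∫⁻ q : (Fin N → X) × (Fin N → X), (2 * (N : ℝ≥0∞) ^ 3) * ∑ j : Fin N,
          (‖Ψ0 q.1‖₊ : ℝ≥0∞) ^ 2 * (Kk (q.1 j) (q.2 0) * (‖Ψ0 q.2‖₊ : ℝ≥0∞) ^ 2)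
          ∂((volume : Measure (Fin N → X)).prod volume) := by rw [hmeasure]
    _ = (2 * (N : ℝ≥0∞) ^ 3) * ∑ j : Fin N, ∫⁻ q : (Fin N → X) × (Fin N → X),
          (‖Ψ0 q.1‖₊ : ℝ≥0∞) ^ 2 * (Kk (q.1 j) (q.2 0) * (‖Ψ0 q.2‖₊ : ℝ≥0∞) ^ 2)
          ∂((volume : Measure (Fin N → X)).prod volume) := by
        rw [lintegral_const_mul' _ _ h2N3, hswap]
    _ = (2 * (N : ℝ≥0∞) ^ 3) * ∑ _j : Fin N, (N : ℝ≥0∞)⁻¹ * ((N : ℝ≥0∞)⁻¹ * J) := by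
        congr 1
        exact Finset.sum_congr rfl fun j _ => hj j
    _ ≤ (2 * (N : ℝ≥0∞) ^ 3) * ∑ _j : Fin N, J := by
        refine mul_le_mul_right (Finset.sum_le_sum fun j _ => ?_) _
        have hinv1 : (N : ℝ≥0∞)⁻¹ ≤ 1 :=
          ENNReal.inv_le_one.2 (by exact_mod_cast Nat.one_le_iff_ne_zero.2 (NeZero.ne N))
        calc (N : ℝ≥0∞)⁻¹ * ((N : ℝ≥0∞)⁻¹ * J) ≤ 1 * (1 * J) :=
              mul_le_mul' hinv1 (mul_le_mul' hinv1 le_rfl)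
          _ = J := by rw [one_mul, one_mul]
    _ = ((2 * N ^ 4 : ℝ≥0) : ℝ≥0∞) * J := by
        rw [Finset.sum_const, Finset.card_univ, Fintype.card_fin, nsmul_eq_mul]
        push_cast
        ring
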